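/- Suppose P, Q ∈ ℂ[X] are polynomials with P(0) ≠ 0, Q(0) ≠ 0, r ∈ ℚ with r ∉ ℤ, and c ∈ ℂ. Then the polynomial identity P(X)Q(X)[2(λ−1)² + r(λ−1)(λ−2)²] + 16(P'(X)Q(X) − Q'(X)P(X))λ²(λ−2)² = c(λ−1)², where X = 16λ²/(λ−1) is substituted (i.e., both sides are viewed as rational functions of λ), is impossible: the left-hand side has degree in λ equal to deg P + deg Q + 3 while the right-hand side has degree 2. -/

import Mathlib

open Polynomial

/-- The variable `λ` of the rational function field `ℂ(λ)`. -/
noncomputable def l : RatFunc ℂ := RatFunc.X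

/-- The substitution `X = 16λ²/(λ − 1)` (the Hauptmodul relation `ω₂ = 16λ²/(λ−1)`). -/
noncomputable def s : RatFunc ℂ := 16 * l ^ 2 / (l - 1)

/-- The "numerator" of `R(16λ²/(λ−1))·(λ−1)^k`, with coefficient function `f`. -/
noncomputable def TT (f : ℕ → ℂ) (k : ℕ) : ℂ[X] :=
  ∑ i ∈ Finset.range (k + 1), C (f i) * (16 * X ^ 2) ^ i * (X - 1) ^ (k - i)

lemma natDegree_X_sub_one : (X - 1 : ℂ[X]).natDegree = 1 := by
  simpa using natDegree_X_sub_C (1 : ℂ)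

lemma term_natDegree_le (a : ℂ) (i j : ℕ) :
    (C a * (16 * X ^ 2) ^ i * (X - 1) ^ j).natDegree ≤ 2 * i + j := by
  have h16 : ((16 : ℂ[X]) * X ^ 2).natDegree ≤ 2 := by compute_degree
  calc (C a * (16 * X ^ 2) ^ i * (X - 1) ^ j).natDegree
      ≤ (C a * (16 * X ^ 2) ^ i).natDegree + ((X - 1 : ℂ[X]) ^ j).natDegree :=
        natDegree_mul_le
    _ ≤ ((C a).natDegree + ((16 * X ^ 2 : ℂ[X]) ^ i).natDegree) + j := by
        gcongr
        · exact natDegree_mul_le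
        · exact (natDegree_pow_le).trans (by simp [natDegree_X_sub_one])
    _ ≤ (0 + 2 * i) + j := by
        gcongr
        · simp
        · exact (natDegree_pow_le).trans (by nlinarith)
    _ ≤ 2 * i + j := by omega

lemma TT_natDegree_le (f : ℕ → ℂ) (k d : ℕ) (hd : d ≤ k) (hf : ∀ i, d < i → f i = 0) :
    (TT f k).natDegree ≤ k + d := by
  refine natDegree_sum_le_of_forall_le _ _ fun i hi => ?_
  by_cases hid : d < i
  · simp [hf i hid]
  · refine (term_natDegree_le _ _ _).trans ?_
    have : i ≤ d := by omega
    have : k - i ≤ k := Nat.sub_le _ _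
    omega

lemma coeff_term_top (a : ℂ) (i : ℕ) (j : ℕ) :
    (C a * (16 * X ^ 2) ^ i * (X - 1) ^ j).coeff (2 * i + j) = a * 16 ^ i := by
  have h1 : (C a * (16 * X ^ 2) ^ i).natDegree ≤ 2 * i := by
    refine natDegree_mul_le.trans ?_
    have h16 : ((16 : ℂ[X]) * X ^ 2).natDegree ≤ 2 := by compute_degree
    have := natDegree_pow_le (p := (16 * X ^ 2 : ℂ[X])) (n := i)
    simp only [natDegree_C]
    nlinarith
  have h2 : ((X - 1 : ℂ[X]) ^ j).natDegree ≤ j := by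
    refine (natDegree_pow_le (p := (X - 1 : ℂ[X]))).trans ?_
    simp [natDegree_X_sub_one]
  rw [coeff_mul_add_eq_of_natDegree_le h1 h2]
  have hm : ((X - 1 : ℂ[X]) ^ j).coeff j = 1 := by
    have hmon : ((X - 1 : ℂ[X]) ^ j).Monic := by
      have h1 : (X - 1 : ℂ[X]).Monic := by simpa using monic_X_sub_C (1 : ℂ)
      exact h1.pow j
    have hdeg : ((X - 1 : ℂ[X]) ^ j).natDegree = j := by
      simp [natDegree_pow, natDegree_X_sub_one]
    simpa [hdeg] using hmon.coeff_natDegree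
  rw [hm, mul_one]
  have he : C a * (16 * X ^ 2) ^ i = C (a * 16 ^ i) * X ^ (2 * i) := by
    have : ((16 : ℂ[X]) * X ^ 2) ^ i = C ((16 : ℂ) ^ i) * X ^ (2 * i) := by
      rw [mul_pow, ← pow_mul, map_pow, map_ofNat]
    rw [this, map_mul, ← mul_assoc]
  rw [he, coeff_C_mul, coeff_X_pow]
  simp

lemma TT_coeff (f : ℕ → ℂ) (k d : ℕ) (hd : d ≤ k) (hf : ∀ i, d < i → f i = 0) :
    (TT f k).coeff (k + d) = f d * 16 ^ d := by
  rw [TT, finset_sum_coeff]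
  rw [Finset.sum_eq_single d]
  · have : k + d = 2 * d + (k - d) := by omega
    rw [this, coeff_term_top]
  · intro i hi hne
    rcases lt_or_gt_of_ne hne with hlt | hgt
    · refine coeff_eq_zero_of_natDegree_lt ?_
      have h3 := term_natDegree_le (f i) i (k - i)
      have hik : i ≤ k := by simpa [Nat.lt_succ_iff] using hi
      exact lt_of_le_of_lt h3 (by omega)
    · simp [hf i hgt]
  · intro hd'
    exact absurd (Finset.mem_range.mpr (by omega)) hd'

lemma l_sub_one_ne_zero : (l - 1 : RatFunc ℂ) ≠ 0 := by
  have : (l - 1 : RatFunc ℂ) = algebraMap ℂ[X] (RatFunc ℂ) (X - 1) := by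
    simp [l]
  rw [this]
  refine RatFunc.algebraMap_ne_zero ?_
  intro h
  have := natDegree_X_sub_one
  rw [h] at this
  simp at this

lemma s_pow_mul (i k : ℕ) (h : i ≤ k) :
    s ^ i * (l - 1) ^ k = (16 * l ^ 2) ^ i * (l - 1) ^ (k - i) := by
  have hk : (l - 1 : RatFunc ℂ) ^ k = (l - 1) ^ i * (l - 1) ^ (k - i) := by
    rw [← pow_add, Nat.add_sub_cancel' h]
  rw [s, div_pow, hk, ← mul_assoc,
    div_mul_cancel₀ _ (pow_ne_zero _ l_sub_one_ne_zero)]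

lemma TT_spec (R : ℂ[X]) (k : ℕ) (h : R.natDegree ≤ k) :
    algebraMap ℂ[X] (RatFunc ℂ) (TT R.coeff k) = aeval s R * (l - 1) ^ k := by
  rw [aeval_eq_sum_range' (Nat.lt_succ_of_le h), Finset.sum_mul, TT, map_sum]
  refine Finset.sum_congr rfl fun i hi => ?_
  have hik : i ≤ k := by simpa [Nat.lt_succ_iff] using hi
  rw [smul_mul_assoc, s_pow_mul i k hik, map_mul, map_mul, map_pow, map_pow,
    map_mul, RatFunc.algebraMap_C, map_sub, map_one, RatFunc.algebraMap_X]
  rw [Algebra.smul_def, RatFunc.algebraMap_eq_C]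
  simp only [map_ofNat, map_pow, RatFunc.algebraMap_X, l]
  ring

lemma TT_deriv_spec (R : ℂ[X]) (k : ℕ) (h : R.natDegree ≤ k) :
    algebraMap ℂ[X] (RatFunc ℂ) ((X - 1) * TT (fun i => (i : ℂ) * R.coeff i) k)
      = 16 * l ^ 2 * aeval s (derivative R) * (l - 1) ^ k := by
  have hd : (derivative R).natDegree < k + 1 :=
    Nat.lt_succ_of_le ((natDegree_derivative_le R).trans (by omega))
  have hE : algebraMap ℂ[X] (RatFunc ℂ) ((X - 1) * TT (fun i => (i : ℂ) * R.coeff i) k)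
      = ∑ i ∈ Finset.range (k + 1),
          ((i : ℂ) * R.coeff i) • ((16 * l ^ 2) ^ i * (l - 1) ^ (k + 1 - i)) := by
    rw [map_mul, TT, map_sum, Finset.mul_sum]
    refine Finset.sum_congr rfl fun i hi => ?_
    have hik : i ≤ k := by simpa [Nat.lt_succ_iff] using hi
    have hni : k + 1 - i = (k - i) + 1 := by omega
    rw [hni]
    simp only [map_mul, map_sub, map_one, map_pow, map_ofNat, RatFunc.algebraMap_X,
      RatFunc.algebraMap_C, RatFunc.smul_eq_C_mul, l]
    ring
  rw [hE, aeval_eq_sum_range' hd, Finset.mul_sum, Finset.sum_mul,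
    Finset.sum_range_succ', Finset.sum_range_succ]
  have hk0 : 16 * l ^ 2 * ((derivative R).coeff k • s ^ k) * (l - 1) ^ k = 0 := by
    rw [coeff_derivative, coeff_eq_zero_of_natDegree_lt (by omega)]
    simp
  rw [hk0]
  simp only [Nat.cast_zero, zero_mul, zero_smul, add_zero]
  refine Finset.sum_congr rfl fun j hj => ?_
  have hjk : j ≤ k := le_of_lt (Finset.mem_range.mp hj)
  obtain ⟨d, rfl⟩ : ∃ d, k = d + j := ⟨k - j, by omega⟩
  have e1 : d + j + 1 - (j + 1) = d := by omega
  rw [e1, coeff_derivative, RatFunc.smul_eq_C_mul, RatFunc.smul_eq_C_mul]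
  have hs := s_pow_mul j (d + j) hjk
  have e2 : d + j - j = d := by omega
  rw [e2] at hs
  push_cast
  simp only [map_mul]
  linear_combination (-16) * l ^ 2 * RatFunc.C (R.coeff (j + 1)) * RatFunc.C ((j : ℂ) + 1) * hs

theorem no_polynomial_identity (P Q : ℂ[X]) (hP : P.eval 0 ≠ 0) (hQ : Q.eval 0 ≠ 0)
    (r : ℚ) (hr : ∀ m : ℤ, r ≠ (m : ℚ)) (c : ℂ) :
    ¬ (aeval s P * aeval s Q *
          (2 * (l - 1) ^ 2 + RatFunc.C (r : ℂ) * (l - 1) * (l - 2) ^ 2) +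
        16 * (aeval s (derivative P) * aeval s Q - aeval s (derivative Q) * aeval s P) *
          l ^ 2 * (l - 2) ^ 2 =
      RatFunc.C c * (l - 1) ^ 2) := by
  intro h
  have hP0 : P ≠ 0 := fun h0 => hP (by simp [h0])
  have hQ0 : Q ≠ 0 := fun h0 => hQ (by simp [h0])
  have h1 := TT_spec P P.natDegree le_rfl
  have h2 := TT_spec Q Q.natDegree le_rfl
  have h3 := TT_deriv_spec P P.natDegree le_rfl
  have h4 := TT_deriv_spec Q Q.natDegree le_rfl
  set n := P.natDegree with hn
  set m := Q.natDegree with hm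
  have ha : P.coeff n ≠ 0 := by
    rw [hn]; exact fun hc => hP0 (Polynomial.leadingCoeff_eq_zero.mp hc)
  have hb : Q.coeff m ≠ 0 := by
    rw [hm]; exact fun hc => hQ0 (Polynomial.leadingCoeff_eq_zero.mp hc)
  rw [show l = RatFunc.X from rfl] at h h1 h2 h3 h4
  rw [map_mul, map_sub, map_one, RatFunc.algebraMap_X] at h3 h4
  have hFG : TT P.coeff n * TT Q.coeff m *
        (2 * (X - 1) ^ 2 + C (r : ℂ) * ((X - 1) * (X - 2) ^ 2)) +
      (X - 2) ^ 2 * ((X - 1) * TT (fun i => (i : ℂ) * P.coeff i) n * TT Q.coeff m -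
        (X - 1) * TT (fun i => (i : ℂ) * Q.coeff i) m * TT P.coeff n)
      = C c * (X - 1) ^ (n + m + 2) := by
    apply RatFunc.algebraMap_injective ℂ
    simp only [map_add, map_mul, map_sub, map_pow, map_ofNat, map_one,
      RatFunc.algebraMap_C, RatFunc.algebraMap_X]
    linear_combination
      ((2 * (RatFunc.X - 1) ^ 2
          + RatFunc.C (r : ℂ) * ((RatFunc.X - 1) * (RatFunc.X - 2) ^ 2)) *
            (algebraMap ℂ[X] (RatFunc ℂ)) (TT Q.coeff m)
        - (RatFunc.X - 2) ^ 2 *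
            (16 * RatFunc.X ^ 2 * aeval s (derivative Q) * (RatFunc.X - 1) ^ m)) * h1
      + ((2 * (RatFunc.X - 1) ^ 2
          + RatFunc.C (r : ℂ) * ((RatFunc.X - 1) * (RatFunc.X - 2) ^ 2)) *
            (aeval s P * (RatFunc.X - 1) ^ n)
        + (RatFunc.X - 2) ^ 2 *
            (16 * RatFunc.X ^ 2 * aeval s (derivative P) * (RatFunc.X - 1) ^ n)) * h2
      + (RatFunc.X - 2) ^ 2 * (algebraMap ℂ[X] (RatFunc ℂ)) (TT Q.coeff m) * h3
      - (RatFunc.X - 2) ^ 2 * (algebraMap ℂ[X] (RatFunc ℂ)) (TT P.coeff n) * h4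
      + (RatFunc.X - 1) ^ n * (RatFunc.X - 1) ^ m * h
  -- now compare coefficients at degree n+n+(m+m)+3
  have hfP : ∀ i, n < i → P.coeff i = 0 := fun i hi => coeff_eq_zero_of_natDegree_lt hi
  have hfQ : ∀ i, m < i → Q.coeff i = 0 := fun i hi => coeff_eq_zero_of_natDegree_lt hi
  have hfP' : ∀ i, n < i → (i : ℂ) * P.coeff i = 0 := fun i hi => by
    rw [hfP i hi, mul_zero]
  have hfQ' : ∀ i, m < i → (i : ℂ) * Q.coeff i = 0 := fun i hi => by
    rw [hfQ i hi, mul_zero]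
  have b1 : (TT P.coeff n).natDegree ≤ n + n := TT_natDegree_le _ n n le_rfl hfP
  have b2 : (TT Q.coeff m).natDegree ≤ m + m := TT_natDegree_le _ m m le_rfl hfQ
  have b3 : (TT (fun i => (i : ℂ) * P.coeff i) n).natDegree ≤ n + n :=
    TT_natDegree_le _ n n le_rfl hfP'
  have b4 : (TT (fun i => (i : ℂ) * Q.coeff i) m).natDegree ≤ m + m :=
    TT_natDegree_le _ m m le_rfl hfQ'
  have c1 : (TT P.coeff n).coeff (n + n) = P.coeff n * 16 ^ n := TT_coeff _ n n le_rfl hfP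
  have c2 : (TT Q.coeff m).coeff (m + m) = Q.coeff m * 16 ^ m := TT_coeff _ m m le_rfl hfQ
  have c3 : (TT (fun i => (i : ℂ) * P.coeff i) n).coeff (n + n)
      = (n : ℂ) * P.coeff n * 16 ^ n := TT_coeff _ n n le_rfl hfP'
  have c4 : (TT (fun i => (i : ℂ) * Q.coeff i) m).coeff (m + m)
      = (m : ℂ) * Q.coeff m * 16 ^ m := TT_coeff _ m m le_rfl hfQ'
  have hX1 : (X - 1 : ℂ[X]).natDegree ≤ 1 := natDegree_X_sub_one.le
  have hX2deg : (X - 2 : ℂ[X]).natDegree = 1 := by compute_degree!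
  have hX2mon : (X - 2 : ℂ[X]).Monic := by monicity!
  have hX1mon : (X - 1 : ℂ[X]).Monic := by monicity!
  have hX2sq : ((X - 2 : ℂ[X]) ^ 2).coeff 2 = 1 := by
    have := (hX2mon.pow 2).coeff_natDegree
    simpa [natDegree_pow, hX2deg] using this
  have hX2sqdeg : ((X - 2 : ℂ[X]) ^ 2).natDegree ≤ 2 := by
    refine (natDegree_pow_le (p := (X - 2 : ℂ[X]))).trans ?_
    simp [hX2deg]
  have hw1 : (X - 1 : ℂ[X]).coeff 1 = 1 := by
    simpa [natDegree_X_sub_one] using hX1mon.coeff_natDegree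
  -- coefficient of A at 3
  have hB3 : ((X - 1) * (X - 2) ^ 2 : ℂ[X]).coeff 3 = 1 := by
    have hmon : ((X - 1) * (X - 2) ^ 2 : ℂ[X]).Monic := hX1mon.mul (hX2mon.pow 2)
    have hdeg : ((X - 1) * (X - 2) ^ 2 : ℂ[X]).natDegree = 3 := by
      rw [hX1mon.natDegree_mul (hX2mon.pow 2), natDegree_X_sub_one, natDegree_pow, hX2deg]
    simpa [hdeg] using hmon.coeff_natDegree
  have hBdeg : ((X - 1) * (X - 2) ^ 2 : ℂ[X]).natDegree ≤ 3 := by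
    refine natDegree_mul_le.trans ?_
    simp only [natDegree_X_sub_one]
    omega
  have hA3 : (2 * (X - 1) ^ 2 + C (r : ℂ) * ((X - 1) * (X - 2) ^ 2)).coeff 3 = (r : ℂ) := by
    rw [coeff_add, coeff_C_mul, hB3]
    have : ((2 : ℂ[X]) * (X - 1) ^ 2).natDegree ≤ 2 := by
      refine natDegree_mul_le.trans ?_
      have : ((X - 1 : ℂ[X]) ^ 2).natDegree ≤ 2 := by
        refine (natDegree_pow_le (p := (X - 1 : ℂ[X]))).trans ?_
        simp [natDegree_X_sub_one]
      simpa using this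
    rw [coeff_eq_zero_of_natDegree_lt (lt_of_le_of_lt this (by omega))]
    ring
  have hAdeg : (2 * (X - 1) ^ 2 + C (r : ℂ) * ((X - 1) * (X - 2) ^ 2)).natDegree ≤ 3 := by
    refine natDegree_add_le_of_degree_le ?_ ?_
    · refine natDegree_mul_le.trans ?_
      have : ((X - 1 : ℂ[X]) ^ 2).natDegree ≤ 2 := by
        refine (natDegree_pow_le (p := (X - 1 : ℂ[X]))).trans ?_
        simp [natDegree_X_sub_one]
      simpa using this.trans (by omega)
    · refine natDegree_mul_le.trans ?_
      simpa using hBdeg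
  -- coefficient of both sides of hFG at n+n+(m+m)+3
  have hcoeff := congrArg (fun p : ℂ[X] => p.coeff (n + n + (m + m) + 3)) hFG
  have hGc : (C c * (X - 1) ^ (n + m + 2) : ℂ[X]).coeff (n + n + (m + m) + 3) = 0 := by
    refine coeff_eq_zero_of_natDegree_lt ?_
    have : (C c * (X - 1) ^ (n + m + 2) : ℂ[X]).natDegree ≤ n + m + 2 := by
      refine natDegree_mul_le.trans ?_
      have : ((X - 1 : ℂ[X]) ^ (n + m + 2)).natDegree ≤ n + m + 2 := by
        refine (natDegree_pow_le (p := (X - 1 : ℂ[X]))).trans ?_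
        simp [natDegree_X_sub_one]
      simpa using this
    omega
  have hS1 : (TT P.coeff n * TT Q.coeff m *
        (2 * (X - 1) ^ 2 + C (r : ℂ) * ((X - 1) * (X - 2) ^ 2))).coeff (n + n + (m + m) + 3)
      = P.coeff n * 16 ^ n * (Q.coeff m * 16 ^ m) * (r : ℂ) := by
    rw [coeff_mul_add_eq_of_natDegree_le (natDegree_mul_le.trans (add_le_add b1 b2)) hAdeg,
      coeff_mul_add_eq_of_natDegree_le b1 b2, c1, c2, hA3]
  have hS2 : ((X - 2) ^ 2 * ((X - 1) * TT (fun i => (i : ℂ) * P.coeff i) n * TT Q.coeff m -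
        (X - 1) * TT (fun i => (i : ℂ) * Q.coeff i) m * TT P.coeff n)).coeff
          (n + n + (m + m) + 3)
      = (n : ℂ) * P.coeff n * 16 ^ n * (Q.coeff m * 16 ^ m)
        - (m : ℂ) * Q.coeff m * 16 ^ m * (P.coeff n * 16 ^ n) := by
    have e2 : n + n + (m + m) + 3 = 2 + (1 + (n + n) + (m + m)) := by omega
    have binner : ((X - 1) * TT (fun i => (i : ℂ) * P.coeff i) n * TT Q.coeff m -
        (X - 1) * TT (fun i => (i : ℂ) * Q.coeff i) m * TT P.coeff n).natDegree
          ≤ 1 + (n + n) + (m + m) := by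
      refine (natDegree_sub_le _ _).trans (max_le ?_ ?_)
      · exact natDegree_mul_le.trans (add_le_add
          (natDegree_mul_le.trans (add_le_add hX1 b3)) b2)
      · refine (natDegree_mul_le.trans (add_le_add
          (natDegree_mul_le.trans (add_le_add hX1 b4)) b1)).trans (by omega)
    have c5 : ((X - 1) * TT (fun i => (i : ℂ) * P.coeff i) n * TT Q.coeff m).coeff
          (1 + (n + n) + (m + m))
        = ((n : ℂ) * P.coeff n * 16 ^ n) * (Q.coeff m * 16 ^ m) := by
      rw [coeff_mul_add_eq_of_natDegree_le (natDegree_mul_le.trans (add_le_add hX1 b3)) b2,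
        coeff_mul_add_eq_of_natDegree_le hX1 b3, hw1, c3, c2, one_mul]
    have c6 : ((X - 1) * TT (fun i => (i : ℂ) * Q.coeff i) m * TT P.coeff n).coeff
          (1 + (n + n) + (m + m))
        = ((m : ℂ) * Q.coeff m * 16 ^ m) * (P.coeff n * 16 ^ n) := by
      have e3 : 1 + (n + n) + (m + m) = 1 + (m + m) + (n + n) := by omega
      rw [e3, coeff_mul_add_eq_of_natDegree_le (natDegree_mul_le.trans (add_le_add hX1 b4)) b1,
        coeff_mul_add_eq_of_natDegree_le hX1 b4, hw1, c4, c1, one_mul]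
    rw [e2, coeff_mul_add_eq_of_natDegree_le hX2sqdeg binner, hX2sq, one_mul, coeff_sub, c5, c6]
  rw [coeff_add, hS1, hS2, hGc] at hcoeff
  have hne : (r : ℂ) + (n : ℂ) - (m : ℂ) ≠ 0 := by
    intro h0
    apply hr ((m : ℤ) - (n : ℤ))
    have : (r : ℂ) = (m : ℂ) - (n : ℂ) := by linear_combination h0
    exact_mod_cast this
  have hkey : P.coeff n * Q.coeff m * (16 ^ n * 16 ^ m) * ((r : ℂ) + (n : ℂ) - (m : ℂ)) = 0 := by
    linear_combination hcoeff
  rcases mul_eq_zero.mp hkey with h' | h'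
  · rcases mul_eq_zero.mp h' with h'' | h''
    · rcases mul_eq_zero.mp h'' with h3' | h3'
      · exact ha h3'
      · exact hb h3'
    · exact mul_ne_zero (pow_ne_zero _ (by norm_num)) (pow_ne_zero _ (by norm_num)) h''
  · exact hne h'
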